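/- Let μ be a semifinite nonatomic Borel measure on a compactum X with μ(X) > 0. Then the σ-ideal J₀(μ) is not homogeneous; that is, there exists a Borel set E ⊆ X with E ∉ J₀(μ) such that for every Borel-measurable map f : X → X with range contained in E there is a set A ∈ J₀(μ) with f⁻¹(A) ∉ J₀(μ). -/

import Mathlib

open MeasureTheory Topology Filter Set ENNReal

/-- `J₀(μ)`: Borel sets coverable by countably many compact sets of `μ`-measure zero. -/
def Jzero {X : Type*} [TopologicalSpace X] [MeasurableSpace X] (μ : Measure X) :
    Set (Set X) :=
  {A | MeasurableSet A ∧
    ∃ K : ℕ → Set X, (∀ n, IsCompact (K n) ∧ μ (K n) = 0) ∧ A ⊆ ⋃ n, K n}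

/-- `J_f(μ)`: Borel sets coverable by countably many compact sets of finite `μ`-measure. -/
def Jfin {X : Type*} [TopologicalSpace X] [MeasurableSpace X] (μ : Measure X) :
    Set (Set X) :=
  {A | MeasurableSet A ∧
    ∃ K : ℕ → Set X, (∀ n, IsCompact (K n) ∧ μ (K n) < ⊤) ∧ A ⊆ ⋃ n, K n}

/-- `μ` is semifinite: every Borel set of positive measure contains a Borel subset of
finite positive measure. -/
def Semifinite {X : Type*} [MeasurableSpace X] (μ : Measure X) : Prop :=
  ∀ A : Set X, MeasurableSet A → 0 < μ A →
    ∃ B ⊆ A, MeasurableSet B ∧ 0 < μ B ∧ μ B < ⊤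

/-- Any set in `J₀(μ)` is `μ`-null. -/
lemma Jzero.null {X : Type*} [TopologicalSpace X] [MeasurableSpace X] {μ : Measure X}
    {A : Set X} (h : A ∈ Jzero μ) : μ A = 0 := by
  obtain ⟨-, K, hK, hsub⟩ := h
  exact measure_mono_null hsub (measure_iUnion_null_iff.2 fun n => (hK n).2)

/-- Proposition 6.1(i): for a semifinite nonatomic Borel measure `μ` on a compactum `X`
with `μ(X) > 0`, the σ-ideal `J₀(μ)` is not homogeneous. -/
theorem statement7 {X : Type*}
    [MetricSpace X] [CompactSpace X] [Nonempty X] [MeasurableSpace X] [BorelSpace X]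
    (μ : Measure X) (hμna : ∀ x : X, μ {x} = 0) (hμsemi : Semifinite μ)
    (hμpos : 0 < μ Set.univ) :
    ∃ E : Set X, MeasurableSet E ∧ E ∉ Jzero μ ∧
      ∀ f : X → X, Measurable f → Set.range f ⊆ E →
        ∃ A ∈ Jzero μ, f ⁻¹' A ∉ Jzero μ := by
  classical
  -- Step 1: a compact set `K` with `0 < μ K < ∞`.
  obtain ⟨B, hBu, hBm, hB0, hBfin⟩ := hμsemi Set.univ MeasurableSet.univ hμpos
  haveI : IsFiniteMeasure (μ.restrict B) := ⟨by rwa [Measure.restrict_apply_univ]⟩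
  obtain ⟨K, hKB, hKcomp, hKr0⟩ :=
    (Measure.InnerRegular.innerRegular (μ := μ.restrict B)) hBm 0
      (by rwa [Measure.restrict_apply_self])
  have hKm : MeasurableSet K := hKcomp.measurableSet
  have hK0 : 0 < μ K := by
    refine lt_of_lt_of_le hKr0 (Measure.restrict_apply_le _ _)
  have hKfin : μ K < ⊤ := lt_of_le_of_lt (measure_mono hKB) hBfin
  -- the finite measure `m = μ ⌞ K`
  set m : Measure X := μ.restrict K with hm
  haveI : IsFiniteMeasure m := ⟨by rwa [Measure.restrict_apply_univ]⟩
  have hmle : ∀ s, m s ≤ μ s := fun s => Measure.restrict_apply_le _ _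
  have hmuniv : m Set.univ = μ K := Measure.restrict_apply_univ _
  -- the support `S` of `m`
  set S : Set X := {x | ∀ V : Set X, IsOpen V → x ∈ V → 0 < m V} with hS
  have hScompl : Sᶜ = ⋃₀ {V : Set X | IsOpen V ∧ m V = 0} := by
    ext x
    simp only [hS, Set.mem_compl_iff, Set.mem_setOf_eq, Set.mem_sUnion, not_forall]
    constructor
    · rintro ⟨V, hVo, hxV, hV0⟩
      exact ⟨V, ⟨hVo, by simpa [pos_iff_ne_zero, not_not] using hV0⟩, hxV⟩
    · rintro ⟨V, ⟨hVo, hV0⟩, hxV⟩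
      exact ⟨V, hVo, hxV, by simp [hV0]⟩
  have hSclosed : IsClosed S := by
    rw [← isOpen_compl_iff, hScompl]
    exact isOpen_sUnion fun V hV => hV.1
  have hmSc : m Sᶜ = 0 := by
    obtain ⟨T, hTc, hTsub, hTU⟩ :=
      TopologicalSpace.isOpen_sUnion_countable {V : Set X | IsOpen V ∧ m V = 0}
        (fun V hV => hV.1)
    rw [hScompl, ← hTU, Set.sUnion_eq_biUnion]
    exact (measure_biUnion_null_iff hTc).2 fun V hV => (hTsub hV).2
  have hSK : S ⊆ K := by
    intro x hx
    by_contra hxK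
    have h0 : m Kᶜ = 0 := by
      rw [hm, Measure.restrict_apply hKm.compl]
      simp
    have := hx Kᶜ hKcomp.isClosed.isOpen_compl hxK
    simp [h0] at this
  have hSne : S.Nonempty := by
    rcases Set.eq_empty_or_nonempty S with h | h
    · exfalso
      have : m Set.univ = 0 := by
        have : (Set.univ : Set X) = Sᶜ := by rw [h]; simp
        rw [this, hmSc]
      rw [hmuniv] at this
      exact hK0.ne' this
    · exact h
  have hSm : MeasurableSet S := hSclosed.measurableSet
  -- a dense sequence in `S`
  haveI : CompactSpace ↥S := isCompact_iff_compactSpace.1 (hSclosed.isCompact)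
  haveI : Nonempty ↥S := hSne.to_subtype
  obtain ⟨u, hu⟩ := TopologicalSpace.exists_dense_seq ↥S
  set d : ℕ → X := fun i => (u i : X) with hd
  have hdS : ∀ i, d i ∈ S := fun i => (u i).2
  have hdense : ∀ x ∈ S, ∀ V : Set X, IsOpen V → x ∈ V → ∃ i, d i ∈ V := by
    intro x hx V hVo hxV
    have h1 : (⟨x, hx⟩ : ↥S) ∈ closure (Set.range u) := hu ⟨x, hx⟩
    have h2 : x ∈ closure (Set.range d) := by
      rw [closure_subtype] at h1
      exact (by simpa [← Set.range_comp] using h1 : x ∈ closure (Set.range (Subtype.val ∘ u)))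
    obtain ⟨y, hyV, hyr⟩ := mem_closure_iff.1 h2 V hVo hxV
    obtain ⟨i, rfl⟩ := hyr
    exact ⟨i, hyV⟩
  -- small balls around the dense sequence
  have hball : ∀ i k : ℕ, ∃ r : ℝ, 0 < r ∧
      m (Metric.ball (d i) r) < 2⁻¹ ^ i * 2⁻¹ ^ k := by
    intro i k
    have hd0 : m {d i} = 0 := le_antisymm (by rw [← hμna (d i)]; exact hmle _) bot_le
    have ht : Tendsto (fun r => m (Metric.cthickening r {d i})) (𝓝 0) (𝓝 0) := by
      have := tendsto_measure_cthickening_of_isClosed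
        (μ := m) (s := {d i}) ⟨1, one_pos, measure_ne_top m _⟩ isClosed_singleton
      rwa [hd0] at this
    have hε : (0 : ℝ≥0∞) < 2⁻¹ ^ i * 2⁻¹ ^ k := by
      apply ENNReal.mul_pos <;> exact pow_ne_zero _ (by norm_num)
    have hev : ∀ᶠ r in 𝓝[>] (0:ℝ),
        m (Metric.cthickening r {d i}) < 2⁻¹ ^ i * 2⁻¹ ^ k :=
      (ht.eventually (gt_mem_nhds hε)).filter_mono nhdsWithin_le_nhds
    obtain ⟨r, hrlt, hrpos⟩ := (hev.and self_mem_nhdsWithin).exists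
    refine ⟨r, hrpos, lt_of_le_of_lt (measure_mono ?_) hrlt⟩
    rw [Metric.cthickening_singleton _ hrpos.le]
    exact Metric.ball_subset_closedBall
  choose δ hδpos hδlt using hball
  -- the open sets `U k` and the Gδ set `G`
  set U : ℕ → Set X := fun k => ⋃ i, Metric.ball (d i) (δ i k) with hU
  have hUopen : ∀ k, IsOpen (U k) := fun k => isOpen_iUnion fun i => Metric.isOpen_ball
  have hUd : ∀ k i, d i ∈ U k := fun k i =>
    Set.mem_iUnion.2 ⟨i, Metric.mem_ball_self (hδpos i k)⟩
  have hUm : ∀ k, m (U k) ≤ 2 * 2⁻¹ ^ k := by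
    intro k
    calc m (U k) ≤ ∑' i, m (Metric.ball (d i) (δ i k)) := measure_iUnion_le _
      _ ≤ ∑' i, (2⁻¹:ℝ≥0∞) ^ i * 2⁻¹ ^ k := ENNReal.tsum_le_tsum fun i => (hδlt i k).le
      _ = (∑' i, (2⁻¹:ℝ≥0∞) ^ i) * 2⁻¹ ^ k := ENNReal.tsum_mul_right
      _ = 2 * 2⁻¹ ^ k := by
          rw [ENNReal.tsum_geometric]
          norm_num
  set G : Set X := S ∩ ⋂ k, U k with hG
  have hGm : MeasurableSet G :=
    hSm.inter (MeasurableSet.iInter fun k => (hUopen k).measurableSet)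
  have hGU : ∀ k, G ⊆ U k := fun k =>
    (Set.inter_subset_right).trans (Set.iInter_subset _ k)
  have hmG : m G = 0 := by
    have hbound : ∀ k, m G ≤ 2 * 2⁻¹ ^ k := fun k => (measure_mono (hGU k)).trans (hUm k)
    have hpow : Tendsto (fun k : ℕ => (2:ℝ≥0∞) * 2⁻¹ ^ k) atTop (𝓝 0) := by
      have h1 := ENNReal.tendsto_pow_atTop_nhds_zero_of_lt_one
        (by norm_num : (2⁻¹:ℝ≥0∞) < 1)
      have := ENNReal.Tendsto.const_mul (a := 2) h1 (Or.inr (by norm_num))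
      simpa using this
    exact le_antisymm (ge_of_tendsto hpow (Filter.Eventually.of_forall hbound)) bot_le
  have hμG : μ G = 0 := by
    have hGK : G ⊆ K := (Set.inter_subset_left).trans hSK
    have : μ G = m G := by
      rw [hm, Measure.restrict_apply hGm, Set.inter_eq_self_of_subset_left hGK]
    rw [this, hmG]
  -- `G ∉ J₀(μ)` by the Baire category theorem in `S`
  have hGnot : G ∉ Jzero μ := by
    rintro ⟨-, C, hC, hcover⟩
    set F : ℕ ⊕ ℕ → Set ↥S := Sum.elim
      (fun k => (Subtype.val : ↥S → X) ⁻¹' (U k)ᶜ)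
      (fun n => (Subtype.val : ↥S → X) ⁻¹' (C n)) with hF
    have hFclosed : ∀ i, IsClosed (F i) := by
      rintro (k | n)
      · exact ((hUopen k).isClosed_compl).preimage continuous_subtype_val
      · exact ((hC n).1.isClosed).preimage continuous_subtype_val
    have hFcover : ⋃ i, F i = Set.univ := by
      ext x
      simp only [Set.mem_iUnion, Set.mem_univ, iff_true]
      by_cases hx : ∀ k, (x : X) ∈ U k
      · have hxG : (x : X) ∈ G := ⟨x.2, Set.mem_iInter.2 hx⟩
        obtain ⟨n, hn⟩ := Set.mem_iUnion.1 (hcover hxG)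
        exact ⟨Sum.inr n, hn⟩
      · push_neg at hx
        obtain ⟨k, hk⟩ := hx
        exact ⟨Sum.inl k, hk⟩
    obtain ⟨i, y, hy⟩ := nonempty_interior_of_iUnion_of_closed hFclosed hFcover
    obtain ⟨W, hWopen, hWpre⟩ := isOpen_induced_iff.1 (isOpen_interior (s := F i))
    have hyW : (y : X) ∈ W := by rw [← hWpre] at hy; exact hy
    have hWF : (Subtype.val : ↥S → X) ⁻¹' W ⊆ F i := by rw [hWpre]; exact interior_subset
    cases i with
    | inl k =>
        obtain ⟨j, hj⟩ := hdense (y : X) y.2 W hWopen hyW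
        have : d j ∉ U k := hWF (show (⟨d j, hdS j⟩ : ↥S) ∈ _ from hj)
        exact this (hUd k j)
    | inr n =>
        -- `S ∩ W ⊆ C n`, hence `m W = 0`, contradicting `y ∈ S`
        have hsub : W ∩ S ⊆ C n := by
          rintro z ⟨hzW, hzS⟩
          exact hWF (show (⟨z, hzS⟩ : ↥S) ∈ (Subtype.val : ↥S → X) ⁻¹' W from hzW)
        have hmW0 : m W = 0 := by
          have hsplit : m W = m (W ∩ S) + m (W \ S) :=
            (measure_inter_add_diff W hSm).symm
          have h1 : m (W ∩ S) = 0 :=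
            measure_mono_null hsub
              (le_antisymm (le_of_le_of_eq (hmle (C n)) (hC n).2) bot_le)
          have h2 : m (W \ S) = 0 :=
            measure_mono_null (fun z hz => hz.2) hmSc
          rw [hsplit, h1, h2, add_zero]
        have := y.2 W hWopen hyW
        rw [hmW0] at this
        exact lt_irrefl _ this
  -- Conclusion
  refine ⟨G, hGm, hGnot, ?_⟩
  intro f hf hfrange
  -- push `m` forward along `f`; it is a finite measure concentrated on `G`
  set ν : Measure X := m.map f with hν
  haveI : IsFiniteMeasure ν := by
    refine ⟨?_⟩
    rw [hν, Measure.map_apply hf MeasurableSet.univ]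
    exact measure_lt_top m _
  have hνG : 0 < ν G := by
    rw [hν, Measure.map_apply hf hGm, Set.preimage_eq_univ_iff.2 hfrange, hmuniv]
    exact hK0
  obtain ⟨C, hCG, hCcomp, hCpos⟩ :=
    (Measure.InnerRegular.innerRegular (μ := ν)) hGm 0 hνG
  refine ⟨C, ⟨hCcomp.measurableSet, fun _ => C,
    fun _ => ⟨hCcomp, measure_mono_null hCG hμG⟩, Set.subset_iUnion (fun _ => C) 0⟩, ?_⟩
  intro hpre
  have h0 : μ (f ⁻¹' C) = 0 := Jzero.null hpre
  have : ν C ≤ μ (f ⁻¹' C) := by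
    rw [hν, Measure.map_apply hf hCcomp.measurableSet]
    exact hmle _
  rw [h0] at this
  exact (hCpos.trans_le this).ne' rfl
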